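/- For every real β > 1 and every integer k ≥ 0, W_β'(β^k) = -β^{-k} · W_β(β^{-1}) · ∏_{l=1}^{k} (1 - β^l). -/

import Mathlib

/-- `Wprod β z = ∏_{j=0}^∞ (1 - z·β^{-j})`, the entire function from the context. -/
noncomputable def Wprod (β : ℝ) (z : ℂ) : ℂ := ∏' j : ℕ, (1 - z / (β : ℂ) ^ j)

namespace Waux

lemma norm_term (β : ℝ) (hβ : 1 < β) (z : ℂ) (j : ℕ) :
    ‖z / (β : ℂ) ^ j‖ = ‖z‖ * (β⁻¹) ^ j := by
  have hβ0 : (0:ℝ) < β := lt_trans one_pos hβ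
  rw [norm_div, norm_pow, Complex.norm_real, Real.norm_eq_abs, abs_of_pos hβ0, inv_pow,
    div_eq_mul_inv]

lemma log_bound (β : ℝ) (hβ : 1 < β) {r : ℝ} (hr1 : r < 1) {z : ℂ} (hz : ‖z‖ ≤ r) (j : ℕ) :
    ‖Complex.log (1 - z / (β : ℂ) ^ j)‖ ≤ ((r * (1 - r)⁻¹ / 2 + 1) * r) * (β⁻¹) ^ j := by
  have hβ0 : (0:ℝ) < β := lt_trans one_pos hβ
  have hr0 : (0:ℝ) ≤ r := le_trans (norm_nonneg z) hz
  have hpj : (β⁻¹ : ℝ) ^ j ≤ 1 :=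
    pow_le_one₀ (inv_nonneg.2 hβ0.le) (inv_le_one_of_one_le₀ hβ.le)
  have hpj0 : (0:ℝ) ≤ (β⁻¹) ^ j := pow_nonneg (inv_nonneg.2 hβ0.le) j
  set w : ℂ := -(z / (β : ℂ) ^ j) with hw
  have hwn : ‖w‖ = ‖z‖ * (β⁻¹) ^ j := by rw [hw, norm_neg, norm_term β hβ]
  have hwt : ‖w‖ ≤ r * (β⁻¹) ^ j := by rw [hwn]; gcongr
  have hwr : ‖w‖ ≤ r := hwt.trans (by nlinarith)
  have hw1 : ‖w‖ < 1 := lt_of_le_of_lt hwr hr1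
  have h := Complex.norm_log_one_add_le hw1
  have heq : (1 : ℂ) + w = 1 - z / (β : ℂ) ^ j := by rw [hw]; ring
  rw [heq] at h
  refine h.trans ?_
  have hinv : (1 - ‖w‖)⁻¹ ≤ (1 - r)⁻¹ := by
    apply inv_anti₀ <;> linarith
  have hinv0 : (0:ℝ) ≤ (1 - ‖w‖)⁻¹ := inv_nonneg.2 (by linarith)
  have h1 : ‖w‖ ^ 2 * (1 - ‖w‖)⁻¹ / 2 ≤ (r * (1 - r)⁻¹ / 2) * (r * (β⁻¹) ^ j) := by
    rw [sq]
    calc ‖w‖ * ‖w‖ * (1 - ‖w‖)⁻¹ / 2 ≤ r * (r * (β⁻¹) ^ j) * (1 - r)⁻¹ / 2 := by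
          gcongr
      _ = (r * (1 - r)⁻¹ / 2) * (r * (β⁻¹) ^ j) := by ring
  calc ‖w‖ ^ 2 * (1 - ‖w‖)⁻¹ / 2 + ‖w‖
      ≤ (r * (1 - r)⁻¹ / 2) * (r * (β⁻¹) ^ j) + r * (β⁻¹) ^ j := add_le_add h1 hwt
    _ = ((r * (1 - r)⁻¹ / 2 + 1) * r) * (β⁻¹) ^ j := by ring

lemma summable_log (β : ℝ) (hβ : 1 < β) {z : ℂ} (hz : ‖z‖ < 1) :
    Summable (fun j : ℕ => Complex.log (1 - z / (β : ℂ) ^ j)) := by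
  have hβ0 : (0:ℝ) < β := lt_trans one_pos hβ
  refine Summable.of_norm_bounded
    ((summable_geometric_of_lt_one (inv_nonneg.2 hβ0.le) (inv_lt_one_of_one_lt₀ hβ)).mul_left
      ((‖z‖ * (1 - ‖z‖)⁻¹ / 2 + 1) * ‖z‖)) ?_
  exact fun j => log_bound β hβ hz le_rfl j

lemma term_ne_zero (β : ℝ) (hβ : 1 < β) {z : ℂ} (hz : ‖z‖ < 1) (j : ℕ) :
    (1 : ℂ) - z / (β : ℂ) ^ j ≠ 0 := by
  have hβ0 : (0:ℝ) < β := lt_trans one_pos hβ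
  intro h
  have h1 : z / (β : ℂ) ^ j = 1 := by
    have := sub_eq_zero.mp h; exact this.symm
  have h2 : ‖z / (β : ℂ) ^ j‖ < 1 := by
    rw [norm_term β hβ]
    calc ‖z‖ * (β⁻¹) ^ j ≤ ‖z‖ * 1 := by
          gcongr
          exact pow_le_one₀ (inv_nonneg.2 hβ0.le) (inv_le_one_of_one_le₀ hβ.le)
      _ < 1 := by simpa using hz
  rw [h1] at h2; simp at h2

lemma hasProd (β : ℝ) (hβ : 1 < β) {z : ℂ} (hz : ‖z‖ < 1) :
    HasProd (fun j : ℕ => 1 - z / (β : ℂ) ^ j)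
      (Complex.exp (∑' j : ℕ, Complex.log (1 - z / (β : ℂ) ^ j))) := by
  have h := (summable_log β hβ hz).hasSum.cexp
  exact h.congr_fun (fun j => (Complex.exp_log (term_ne_zero β hβ hz j)).symm)

lemma multipliable (β : ℝ) (hβ : 1 < β) {z : ℂ} (hz : ‖z‖ < 1) :
    Multipliable (fun j : ℕ => 1 - z / (β : ℂ) ^ j) :=
  ⟨_, hasProd β hβ hz⟩

lemma wprod_eq_exp (β : ℝ) (hβ : 1 < β) {z : ℂ} (hz : ‖z‖ < 1) :
    Wprod β z = Complex.exp (∑' j : ℕ, Complex.log (1 - z / (β : ℂ) ^ j)) :=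
  (hasProd β hβ hz).tprod_eq

lemma continuousAt (β : ℝ) (hβ : 1 < β) :
    ContinuousAt (Wprod β) ((β : ℂ)⁻¹) := by
  have hβ0 : (0:ℝ) < β := lt_trans one_pos hβ
  set r : ℝ := (1 + β⁻¹) / 2 with hrdef
  have hβinv : β⁻¹ < 1 := inv_lt_one_of_one_lt₀ hβ
  have hβinv0 : (0:ℝ) < β⁻¹ := inv_pos.2 hβ0
  have hr1 : r < 1 := by rw [hrdef]; linarith
  have hr0 : (0:ℝ) < r := by rw [hrdef]; linarith
  have hrβ : β⁻¹ < r := by rw [hrdef]; linarith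
  have hmem : ((β : ℂ)⁻¹) ∈ Metric.ball (0:ℂ) r := by
    rw [Metric.mem_ball, dist_zero_right, ← Complex.ofReal_inv, Complex.norm_real,
      Real.norm_eq_abs, abs_of_pos hβinv0]
    exact hrβ
  have hcont : ContinuousOn (fun z : ℂ => ∑' j : ℕ, Complex.log (1 - z / (β : ℂ) ^ j))
      (Metric.ball (0:ℂ) r) := by
    refine continuousOn_tsum (fun j => ?_)
      ((summable_geometric_of_lt_one (inv_nonneg.2 hβ0.le) (inv_lt_one_of_one_lt₀ hβ)).mul_left
        ((r * (1 - r)⁻¹ / 2 + 1) * r)) (fun j x hx => ?_)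
    · refine ContinuousOn.clog ((continuous_const.sub
        (continuous_id.div_const _)).continuousOn) (fun x hx => ?_)
      rw [Metric.mem_ball, dist_zero_right] at hx
      have hnorm : ‖x / (β : ℂ) ^ j‖ < 1 := by
        rw [norm_term β hβ]
        calc ‖x‖ * (β⁻¹) ^ j ≤ ‖x‖ * 1 := by
              gcongr
              exact pow_le_one₀ (inv_nonneg.2 hβ0.le) (inv_le_one_of_one_le₀ hβ.le)
          _ < 1 := by simpa using lt_trans hx hr1
      rw [Complex.mem_slitPlane_iff]
      left
      have hre : (x / (β : ℂ) ^ j).re ≤ ‖x / (β : ℂ) ^ j‖ := Complex.re_le_norm _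
      simp only [Complex.sub_re, Complex.one_re]
      linarith
    · rw [Metric.mem_ball, dist_zero_right] at hx
      exact log_bound β hβ hr1 hx.le j
  have hca : ContinuousAt (fun z : ℂ => ∑' j : ℕ, Complex.log (1 - z / (β : ℂ) ^ j))
      ((β : ℂ)⁻¹) := hcont.continuousAt (Metric.isOpen_ball.mem_nhds hmem)
  have hexp : ContinuousAt
      (fun z : ℂ => Complex.exp (∑' j : ℕ, Complex.log (1 - z / (β : ℂ) ^ j)))
      ((β : ℂ)⁻¹) := Complex.continuous_exp.continuousAt.comp hca
  refine hexp.congr ?_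
  filter_upwards [Metric.isOpen_ball.mem_nhds hmem] with z hz
  rw [Metric.mem_ball, dist_zero_right] at hz
  exact (wprod_eq_exp β hβ (lt_trans hz hr1)).symm

lemma factor (β : ℝ) (hβ : 1 < β) (k : ℕ) {z : ℂ} (hz : ‖z‖ < β ^ (k + 1)) :
    Wprod β z =
      (∏ j ∈ Finset.range (k + 1), (1 - z / (β : ℂ) ^ j)) *
        Wprod β (z / (β : ℂ) ^ (k + 1)) := by
  have hβ0 : (0:ℝ) < β := lt_trans one_pos hβ
  have hz' : ‖z / (β : ℂ) ^ (k + 1)‖ < 1 := by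
    rw [norm_div, norm_pow, Complex.norm_real, Real.norm_eq_abs, abs_of_pos hβ0]
    exact (div_lt_one (pow_pos hβ0 _)).2 hz
  have hshift : ∀ n : ℕ, (1 : ℂ) - z / (β : ℂ) ^ (n + (k + 1)) =
      1 - (z / (β : ℂ) ^ (k + 1)) / (β : ℂ) ^ n := by
    intro n
    rw [div_div, ← pow_add, add_comm (k+1) n]
  have hm : Multipliable (fun n : ℕ => (1:ℂ) - z / (β : ℂ) ^ (n + (k + 1))) := by
    have := multipliable β hβ hz'
    exact this.congr (fun n => (hshift n).symm)
  calc Wprod β z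
      = (∏ j ∈ Finset.range (k + 1), (1 - z / (β : ℂ) ^ j)) *
          ∏' n : ℕ, (1 - z / (β : ℂ) ^ (n + (k + 1))) :=
        (Multipliable.prod_mul_tprod_nat_mul' (f := fun j : ℕ => 1 - z / (β : ℂ) ^ j) hm).symm
    _ = (∏ j ∈ Finset.range (k + 1), (1 - z / (β : ℂ) ^ j)) *
          Wprod β (z / (β : ℂ) ^ (k + 1)) := by
        rw [Wprod]
        exact congrArg _ (tprod_congr hshift)

lemma diff_prod (s : Finset ℕ) (f : ℕ → ℂ → ℂ) (hf : ∀ j, Differentiable ℂ (f j)) :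
    Differentiable ℂ (fun z => ∏ j ∈ s, f j z) := by
  classical
  induction s using Finset.induction_on with
  | empty => simpa using differentiable_const (1:ℂ)
  | insert _ _ hnm ih =>
    simp only [Finset.prod_insert hnm]
    exact (hf _).mul ih

end Waux

/-- for every real β > 1 and every k ∈ ℕ,
W_β'(β^k) = -β^{-k} · W_β(β^{-1}) · ∏_{l=1}^{k} (1 - β^l). -/
theorem statement2 (β : ℝ) (hβ : 1 < β) (k : ℕ) :
    deriv (Wprod β) ((β : ℂ) ^ k) =
      -((β : ℂ) ^ k)⁻¹ * Wprod β ((β : ℂ)⁻¹) * ∏ l ∈ Finset.Icc 1 k, (1 - (β : ℂ) ^ l) := by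
  have hβ0 : (0:ℝ) < β := lt_trans one_pos hβ
  have hb0 : (β : ℂ) ≠ 0 := by
    simpa using (ne_of_gt hβ0)
  set b : ℂ := (β : ℂ) with hbdef
  set z0 : ℂ := b ^ k with hz0def
  set P : ℂ → ℂ := fun z => ∏ j ∈ Finset.range (k + 1), (1 - z / b ^ j) with hPdef
  set Q : ℂ → ℂ := fun z => ∏ j ∈ Finset.range k, (1 - z / b ^ j) with hQdef
  set g : ℂ → ℂ := fun z => Wprod β (z / b ^ (k + 1)) with hgdef
  -- z0 / b^(k+1) = b⁻¹
  have hz0g : z0 / b ^ (k + 1) = b⁻¹ := by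
    rw [hz0def, pow_succ]
    field_simp
  -- eventual equality
  have hz0norm : ‖z0‖ < β ^ (k + 1) := by
    rw [hz0def, hbdef, norm_pow, Complex.norm_real, Real.norm_eq_abs, abs_of_pos hβ0]
    exact pow_lt_pow_right₀ hβ (Nat.lt_succ_self k)
  have hev : Wprod β =ᶠ[nhds z0] fun z => P z * g z := by
    have hopen : IsOpen {z : ℂ | ‖z‖ < β ^ (k + 1)} := by
      have : {z : ℂ | ‖z‖ < β ^ (k + 1)} = Metric.ball (0:ℂ) (β ^ (k+1)) := by
        ext z; simp [Metric.mem_ball, dist_zero_right]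
      rw [this]; exact Metric.isOpen_ball
    filter_upwards [hopen.mem_nhds hz0norm] with z hz
    exact Waux.factor β hβ k hz
  -- P z0 = 0
  have hP0 : P z0 = 0 := by
    rw [hPdef]
    apply Finset.prod_eq_zero (Finset.self_mem_range_succ k)
    rw [hz0def, div_self (pow_ne_zero k hb0), sub_self]
  -- derivative of P
  have hbk0 : b ^ k ≠ 0 := pow_ne_zero k hb0
  have hQdiff : DifferentiableAt ℂ Q z0 := by
    exact (Waux.diff_prod (Finset.range k) (fun j z => 1 - z / b ^ j)
      (fun j => (differentiable_const (1:ℂ)).sub (differentiable_id.div_const _))).differentiableAt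
  have hu : HasDerivAt (fun z : ℂ => 1 - z / b ^ k) (-(b ^ k)⁻¹) z0 := by
    have h0 : HasDerivAt (fun z : ℂ => z / b ^ k) ((b ^ k)⁻¹) z0 := by
      simpa [div_eq_mul_inv] using (hasDerivAt_id z0).div_const (b ^ k)
    simpa using h0.const_sub 1
  have hu0 : (1 : ℂ) - z0 / b ^ k = 0 := by
    rw [hz0def, div_self hbk0, sub_self]
  have hP : HasDerivAt P (Q z0 * -(b ^ k)⁻¹) z0 := by
    have h1 : HasDerivAt (fun z => Q z * (1 - z / b ^ k))
        (deriv Q z0 * (1 - z0 / b ^ k) + Q z0 * -(b ^ k)⁻¹) z0 :=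
      hQdiff.hasDerivAt.mul hu
    rw [hu0, mul_zero, zero_add] at h1
    refine h1.congr_of_eventuallyEq (Filter.Eventually.of_forall (fun z => ?_))
    rw [hPdef]
    simp only [Finset.prod_range_succ]
    rfl
  -- continuity of g at z0
  have hg_cont : ContinuousAt g z0 := by
    have h1 : ContinuousAt (fun z : ℂ => z / b ^ (k + 1)) z0 :=
      (continuous_id.div_const _).continuousAt
    have h2 : ContinuousAt (Wprod β) (z0 / b ^ (k + 1)) := by
      rw [hz0g]
      exact Waux.continuousAt β hβ
    exact ContinuousAt.comp (g := Wprod β) (f := fun z : ℂ => z / b ^ (k + 1)) h2 h1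
  -- derivative of P * g
  have hPg : HasDerivAt (fun z => P z * g z) (Q z0 * -(b ^ k)⁻¹ * g z0) z0 := by
    rw [hasDerivAt_iff_tendsto_slope]
    have htend : Filter.Tendsto (fun z => slope P z0 z * g z)
        (nhdsWithin z0 {z0}ᶜ) (nhds (Q z0 * -(b ^ k)⁻¹ * g z0)) :=
      (hasDerivAt_iff_tendsto_slope.1 hP).mul
        (hg_cont.continuousWithinAt.tendsto)
    refine htend.congr (fun z => ?_)
    rw [slope_def_field, slope_def_field, hP0, sub_zero, zero_mul, sub_zero,
      div_mul_eq_mul_div]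
  have hW : HasDerivAt (Wprod β) (Q z0 * -(b ^ k)⁻¹ * g z0) z0 :=
    hPg.congr_of_eventuallyEq hev
  rw [hW.deriv]
  -- compute Q z0
  have hQval : Q z0 = ∏ l ∈ Finset.Icc 1 k, (1 - b ^ l) := by
    have h1 : ∀ j ∈ Finset.range k, (1 : ℂ) - b ^ k / b ^ j = 1 - b ^ (k - j) := by
      intro j hj
      rw [Finset.mem_range] at hj
      rw [pow_sub₀ b hb0 hj.le, div_eq_mul_inv]
    have h2 : ∀ j ∈ Finset.range k,
        (1 : ℂ) - b ^ (k - j) = (fun l => 1 - b ^ (l + 1)) (k - 1 - j) := by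
      intro j hj
      rw [Finset.mem_range] at hj
      simp only []
      congr 2
      omega
    calc Q z0 = ∏ j ∈ Finset.range k, (1 - b ^ k / b ^ j) := rfl
      _ = ∏ j ∈ Finset.range k, (1 - b ^ (k - j)) := Finset.prod_congr rfl h1
      _ = ∏ j ∈ Finset.range k, ((fun l => 1 - b ^ (l + 1)) (k - 1 - j)) :=
          Finset.prod_congr rfl h2
      _ = ∏ j ∈ Finset.range k, (1 - b ^ (j + 1)) := by
          simpa using Finset.prod_range_reflect (fun l => 1 - b ^ (l + 1)) k
      _ = ∏ l ∈ Finset.Icc 1 k, (1 - b ^ l) := by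
          rw [← Finset.Ico_add_one_right_eq_Icc, Finset.prod_Ico_eq_prod_range]
          simp [add_comm]
  simp only [hQval, hz0g, hgdef]
  ring
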